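/- Let r be an odd integer with r ≥ 3. Then (x+y)^2 does not divide x^r + y^r + z^r + (x+y+z)^r in F_2[x,y,z]. More precisely, substituting s = x+y one has x^r + y^r + z^r + (x+y+z)^r = s·(x^{r−1} + z^{r−1}) + s^2·P for some polynomial P. -/
import Mathlib


open MvPolynomial

/-- The polynomial `x^j + y^j + z^j + (x+y+z)^j` in `F[x,y,z]`. -/
noncomputable def powSum (F : Type*) [CommRing F] (j : ℕ) : MvPolynomial (Fin 3) F :=
  X 0 ^ j + X 1 ^ j + X 2 ^ j + (X 0 + X 1 + X 2) ^ j

lemma pow_add_expand {R : Type*} [CommRing R] (a s : R) :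
    ∀ n : ℕ, 1 ≤ n → ∃ q, (a + s) ^ n = a ^ n + (n : R) * a ^ (n - 1) * s + s ^ 2 * q := by
  intro n hn
  induction n with
  | zero => omega
  | succ m ih =>
    rcases Nat.eq_zero_or_pos m with h0 | h1
    · subst h0; exact ⟨0, by push_cast; ring⟩
    · obtain ⟨q, hq⟩ := ih h1
      obtain ⟨k, rfl⟩ : ∃ k, m = k + 1 := ⟨m - 1, by omega⟩
      refine ⟨((k : R) + 1) * a ^ k + q * (a + s), ?_⟩
      simp only [Nat.add_sub_cancel] at hq ⊢
      push_cast at hq ⊢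
      linear_combination (a + s) * hq

theorem sq_x_add_y_not_dvd_powSum_odd
    (r : ℕ) (hr : 3 ≤ r) (hodd : Odd r) :
    ¬ (X 0 + X 1 : MvPolynomial (Fin 3) (ZMod 2)) ^ 2 ∣ powSum (ZMod 2) r ∧
      ∃ P : MvPolynomial (Fin 3) (ZMod 2),
        powSum (ZMod 2) r =
          (X 0 + X 1) * (X 0 ^ (r - 1) + X 2 ^ (r - 1)) + (X 0 + X 1) ^ 2 * P := by
  set R := MvPolynomial (Fin 3) (ZMod 2)
  have h2 : (2 : R) = 0 := CharTwo.two_eq_zero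
  have hr1 : ((r : ℕ) : R) = 1 := by
    obtain ⟨m, rfl⟩ := hodd
    push_cast
    rw [show ((2 : R)) = 0 from h2]
    ring
  set s : R := X 0 + X 1 with hs
  have hX1 : (X 1 : R) = X 0 + s := by
    rw [hs, ← add_assoc, CharTwo.add_self_eq_zero, zero_add]
  obtain ⟨q1, hq1⟩ := pow_add_expand (X 0 : R) s r (by omega)
  obtain ⟨q2, hq2⟩ := pow_add_expand (X 2 : R) s r (by omega)
  rw [hr1, one_mul] at hq1 hq2
  have key : powSum (ZMod 2) r =
      s * (X 0 ^ (r - 1) + X 2 ^ (r - 1)) + s ^ 2 * (q1 + q2) := by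
    rw [powSum, hX1]
    have hT : (X 0 + (X 0 + s) + X 2 : R) ^ r = (X 2 + s) ^ r := by
      rw [show (X 0 + (X 0 + s) + X 2 : R) = X 2 + s + 2 * X 0 by ring, h2]
      ring
    rw [hT]
    linear_combination hq1 + hq2 + (X 0 ^ r + X 2 ^ r : R) * h2
  refine ⟨?_, q1 + q2, key⟩
  intro hdvd
  set t : R := X 0 ^ (r - 1) + X 2 ^ (r - 1) with ht
  have hst : s ^ 2 ∣ s * t := by
    have : s * t = powSum (ZMod 2) r - s ^ 2 * (q1 + q2) := by rw [key]; ring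
    rw [this]
    exact dvd_sub hdvd (dvd_mul_right _ _)
  have hs0 : s ≠ 0 := by
    intro h
    have := congrArg (coeff (Finsupp.single 0 1)) h
    rw [hs, coeff_add, coeff_X', coeff_X'] at this
    simp [Finsupp.single_eq_single_iff] at this
  have hdvd_t : s ∣ t := by
    rw [sq] at hst
    exact (mul_dvd_mul_iff_left hs0).mp hst
  obtain ⟨u, hu⟩ := hdvd_t
  -- apply the substitution x ↦ x, y ↦ x, z ↦ z
  have hφ := congrArg (aeval (![X 0, X 0, X 2] : Fin 3 → R)) hu
  simp only [map_add, map_mul, map_pow, aeval_X, hs, ht] at hφ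
  rw [show (![X 0, X 0, X 2] : Fin 3 → R) 0 = X 0 from rfl,
      show (![X 0, X 0, X 2] : Fin 3 → R) 1 = X 0 from rfl,
      show (![X 0, X 0, X 2] : Fin 3 → R) 2 = X 2 from rfl,
      CharTwo.add_self_eq_zero, zero_mul] at hφ
  have := congrArg (coeff (Finsupp.single 0 (r - 1))) hφ
  rw [coeff_add, coeff_X_pow, coeff_X_pow, if_pos rfl, if_neg ?_] at this
  · simp at this
  · intro h
    have h0 := DFunLike.congr_fun h 0
    simp at h0
    omega
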